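/- Let r, q, p > 0 and p' > p, and let z₁ ∈ (0, p), z₁' ∈ (0, p'), z₂, z₂' ∈ (0, q) satisfy (z₁ - p)(z₂ - q) = r and (z₁' - p')(z₂' - q) = r. If z₁/z₂ = z₁'/z₂', then z₁ < z₁' and z₂ < z₂'. -/

import Mathlib

theorem stmt_17 (r q p p' z₁ z₁' z₂ z₂' : ℝ)
    (hr : 0 < r) (hq : 0 < q) (hp : 0 < p) (hp' : p < p')
    (hz₁ : z₁ ∈ Set.Ioo 0 p) (hz₁' : z₁' ∈ Set.Ioo 0 p')
    (hz₂ : z₂ ∈ Set.Ioo 0 q) (hz₂' : z₂' ∈ Set.Ioo 0 q)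
    (h1 : (z₁ - p) * (z₂ - q) = r) (h2 : (z₁' - p') * (z₂' - q) = r)
    (hray : z₁ / z₂ = z₁' / z₂') :
    z₁ < z₁' ∧ z₂ < z₂' := by
  obtain ⟨h10, h1p⟩ := hz₁
  obtain ⟨h10', h1p'⟩ := hz₁'
  obtain ⟨h20, h2q⟩ := hz₂
  obtain ⟨h20', h2q'⟩ := hz₂'
  set t := z₁ / z₂ with ht_def
  have ht : 0 < t := div_pos h10 h20
  have e1 : z₁ = t * z₂ := by
    rw [ht_def, div_mul_cancel₀ _ h20.ne']
  have e2 : z₁' = t * z₂' := by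
    rw [hray]
    field_simp
  have hkey : z₂ < z₂' := by
    by_contra h
    push_neg at h
    have hptz : 0 < p - t * z₂ := by linarith [e1 ▸ h1p]
    nlinarith [mul_pos (sub_pos.2 hp') (sub_pos.2 h2q'),
      mul_nonneg (mul_nonneg ht.le (sub_nonneg.2 h)) (sub_pos.2 h2q').le,
      mul_nonneg hptz.le (sub_nonneg.2 h)]
  refine ⟨?_, hkey⟩
  rw [e1, e2]
  exact mul_lt_mul_of_pos_left hkey ht
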